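/- arXiv:1906.05464 — 5 statements merged into one kernel-verified Lean document; each statement's English description precedes it below -/
import Mathlib

section
/- Let n ≥ 1, λ : Fin n → ℝ with λ_j > 0 and ∑_j λ_j = 1, and R = diag(λ) ∈ M_n(ℂ). Identify ℂⁿ⊗ℂⁿ with ℂ^{Fin n × Fin n} and a⊗b with the Kronecker product. Let J̃ be the conjugate-linear map on ℂ^{Fin n × Fin n} given by (J̃w)_{(i,j)} = conj(w_{(j,i)}). Let ρ be a positive semidefinite Hermitian matrix on ℂ^{Fin n × Fin n} with trace 1 such that (i) Tr(ρ·(a⊗1)) = Tr(R·a) for every a ∈ M_n(ℂ), and (ii) J̃∘ρ∘J̃ = ρ. Fix a unitary g ∈ M_n(ℂ), set p_k := g e_{kk} g* and P_k := 1⊗conj(p_k), and define E_g(σ) := ∑_{k} P_k σ P_k. Then for every b ∈ M_n(ℂ): Tr(E_g(ρ)·(1⊗b)) = Tr((∑_k conj(p_k)·R·conj(p_k))·b). (Paper's Lemma 1: the restriction of E_g(ρ) to the complementary subsystem B is implemented by E_g(Jπ_ω(R)J).) -/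
open scoped Matrix Kronecker ComplexOrder

theorem hcol_aux {n : ℕ} (lam : Fin n → ℝ)
    (R : Matrix (Fin n) (Fin n) ℂ)
    (ρ : Matrix (Fin n × Fin n) (Fin n × Fin n) ℂ)
    (hrestrict : ∀ a : Matrix (Fin n) (Fin n) ℂ,
      (ρ * (a ⊗ₖ (1 : Matrix (Fin n) (Fin n) ℂ))).trace = (R * a).trace)
    (i p : Fin n) : ∑ j, ρ (i, j) (p, j) = R i p := by
  have h := hrestrict (Matrix.single p i 1)
  simp only [Matrix.trace, Matrix.mul_apply, Matrix.kroneckerMap_apply,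
    Fintype.sum_prod_type, Matrix.one_apply, Matrix.single,
    Matrix.diag, Matrix.of_apply, mul_ite, ite_mul, mul_one, mul_zero, zero_mul,
    one_mul, ite_and, Finset.sum_ite_eq, Finset.sum_ite_eq', Finset.mem_univ,
    if_true] at h
  rw [Finset.sum_comm] at h
  simp only [Finset.sum_ite_eq, Finset.mem_univ, if_true] at h
  exact h

theorem key_aux {n : ℕ} (lam : Fin n → ℝ)
    (R : Matrix (Fin n) (Fin n) ℂ) (hR : R = Matrix.diagonal fun j => (lam j : ℂ))
    (ρ : Matrix (Fin n × Fin n) (Fin n × Fin n) ℂ)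
    (hrestrict : ∀ a : Matrix (Fin n) (Fin n) ℂ,
      (ρ * (a ⊗ₖ (1 : Matrix (Fin n) (Fin n) ℂ))).trace = (R * a).trace)
    (hJ : ∀ i j p q : Fin n, ρ (i, j) (p, q) = star (ρ (j, i) (q, p)))
    (c : Matrix (Fin n) (Fin n) ℂ) :
    (ρ * ((1 : Matrix (Fin n) (Fin n) ℂ) ⊗ₖ c)).trace = (R * c).trace := by
  have hid : ∀ j q : Fin n, ∑ i, ρ (i, j) (i, q) = R j q := by
    intro j q
    have h1 : ∑ i, ρ (j, i) (q, i) = R j q := hcol_aux lam R ρ hrestrict j q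
    calc ∑ i, ρ (i, j) (i, q) = ∑ i, star (ρ (j, i) (q, i)) := by
          exact Finset.sum_congr rfl fun i _ => hJ i j i q
      _ = star (∑ i, ρ (j, i) (q, i)) := (star_sum _ _).symm
      _ = star (R j q) := by rw [h1]
      _ = R j q := by
          simp [hR, Matrix.diagonal_apply, apply_ite (star : ℂ → ℂ)]
  have expand : (ρ * ((1 : Matrix (Fin n) (Fin n) ℂ) ⊗ₖ c)).trace
      = ∑ i, ∑ j, ∑ p, ∑ q, ρ (i, j) (p, q)
          * ((if p = i then (1 : ℂ) else 0) * c q j) := by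
    simp [Matrix.trace, Matrix.mul_apply, Matrix.kroneckerMap_apply,
      Fintype.sum_prod_type, Matrix.one_apply, Matrix.diag]
  rw [expand]
  have step1 : ∀ i j : Fin n,
      (∑ p, ∑ q, ρ (i, j) (p, q) * ((if p = i then (1 : ℂ) else 0) * c q j))
        = ∑ q, ρ (i, j) (i, q) * c q j := by
    intro i j
    rw [Finset.sum_comm]
    simp [mul_ite, ite_mul, one_mul, mul_zero, zero_mul]
  simp only [step1]
  rw [Finset.sum_comm]
  have step2 : ∀ j : Fin n,
      (∑ i, ∑ q, ρ (i, j) (i, q) * c q j) = ∑ q, R j q * c q j := by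
    intro j
    rw [Finset.sum_comm]
    refine Finset.sum_congr rfl fun q _ => ?_
    rw [← Finset.sum_mul, hid j q]
  simp only [step2]
  simp [Matrix.trace, Matrix.mul_apply, Matrix.diag, mul_comm]

/-- **Paper's Lemma 1.** Let `R = diag(λ)` be a faithful density matrix,
and `ρ` a density matrix on `ℂⁿ⊗ℂⁿ ≅ ℂ^{Fin n × Fin n}` which restricts to `ω = Tr(R·)` on
the subalgebra `{a⊗1}` and is invariant under the modular conjugation `J̃` (entrywise:
`ρ_{(i,j),(p,q)} = conj ρ_{(j,i),(q,p)}`).  For a unitary `g`, let `p_k = g e_{kk} g*` and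
`P_k = 1 ⊗ conj(p_k)`, and `E_g(σ) = ∑_k P_k σ P_k`.  Then the restriction of `E_g(ρ)` to the
complementary subsystem `B = {1⊗b}` is implemented by `∑_k conj(p_k)·R·conj(p_k)`:
`Tr(E_g(ρ)·(1⊗b)) = Tr((∑_k conj(p_k) R conj(p_k))·b)` for every `b`. -/
theorem restriction_of_gauge_operation_to_complementary_subsystem
    {n : ℕ} (lam : Fin n → ℝ) (hpos : ∀ j, 0 < lam j) (hsum : ∑ j, lam j = 1)
    (R : Matrix (Fin n) (Fin n) ℂ) (hR : R = Matrix.diagonal fun j => (lam j : ℂ))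
    (ρ : Matrix (Fin n × Fin n) (Fin n × Fin n) ℂ)
    (hρ : ρ.PosSemidef) (hρtr : ρ.trace = 1)
    (hrestrict : ∀ a : Matrix (Fin n) (Fin n) ℂ,
      (ρ * (a ⊗ₖ (1 : Matrix (Fin n) (Fin n) ℂ))).trace = (R * a).trace)
    (hJ : ∀ i j p q : Fin n, ρ (i, j) (p, q) = star (ρ (j, i) (q, p)))
    (g : Matrix (Fin n) (Fin n) ℂ) (hg : g ∈ Matrix.unitaryGroup (Fin n) ℂ)
    (p : Fin n → Matrix (Fin n) (Fin n) ℂ)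
    (hp : ∀ k, p k = g * Matrix.single k k 1 * gᴴ)
    (P : Fin n → Matrix (Fin n × Fin n) (Fin n × Fin n) ℂ)
    (hP : ∀ k, P k = (1 : Matrix (Fin n) (Fin n) ℂ) ⊗ₖ ((p k).map star)) :
    ∀ b : Matrix (Fin n) (Fin n) ℂ,
      ((∑ k, P k * ρ * P k) * ((1 : Matrix (Fin n) (Fin n) ℂ) ⊗ₖ b)).trace
        = ((∑ k, (p k).map star * R * (p k).map star) * b).trace := by
  intro b
  have hmul : ∀ k, P k * ((1 : Matrix (Fin n) (Fin n) ℂ) ⊗ₖ b) * P k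
      = (1 : Matrix (Fin n) (Fin n) ℂ) ⊗ₖ ((p k).map star * b * (p k).map star) := by
    intro k
    rw [hP, ← Matrix.mul_kronecker_mul, ← Matrix.mul_kronecker_mul, one_mul, one_mul]
  have cyc : ∀ k, ((P k * ρ * P k) * ((1 : Matrix (Fin n) (Fin n) ℂ) ⊗ₖ b)).trace
      = (ρ * (P k * ((1 : Matrix (Fin n) (Fin n) ℂ) ⊗ₖ b) * P k)).trace := by
    intro k
    rw [mul_assoc (P k * ρ), Matrix.trace_mul_cycle, Matrix.trace_mul_comm]
  calc ((∑ k, P k * ρ * P k) * ((1 : Matrix (Fin n) (Fin n) ℂ) ⊗ₖ b)).trace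
      = ∑ k, ((P k * ρ * P k) * ((1 : Matrix (Fin n) (Fin n) ℂ) ⊗ₖ b)).trace := by
        rw [Finset.sum_mul, Matrix.trace_sum]
    _ = ∑ k, (ρ * ((1 : Matrix (Fin n) (Fin n) ℂ)
            ⊗ₖ ((p k).map star * b * (p k).map star))).trace := by
        refine Finset.sum_congr rfl fun k _ => ?_
        rw [cyc k, hmul k]
    _ = ∑ k, (R * ((p k).map star * b * (p k).map star)).trace := by
        refine Finset.sum_congr rfl fun k _ => ?_
        exact key_aux lam R hR ρ hrestrict hJ _
    _ = ∑ k, (((p k).map star * R * (p k).map star) * b).trace := by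
        refine Finset.sum_congr rfl fun k _ => ?_
        rw [← mul_assoc, Matrix.trace_mul_cycle, ← mul_assoc]
    _ = ((∑ k, (p k).map star * R * (p k).map star) * b).trace := by
        rw [Finset.sum_mul, Matrix.trace_sum]
end

section
/- Let n ≥ 1, λ : Fin n → ℝ with λ_j > 0, R = diag(λ) ∈ M_n(ℂ), J(x) := R^{1/2} x† R^{-1/2} the modular conjugation on the GNS space (M_n(ℂ), ⟨a,b⟩_ω = Tr(Ra†b)), and for a ∈ M_n(ℂ) let L_a denote left multiplication, L_a(x) = ax. Then for every a, the map J∘L_a∘J is right multiplication by R^{1/2} a† R^{-1/2}, i.e. (J∘L_a∘J)(x) = x·R^{1/2} a† R^{-1/2}; consequently J∘L_a∘J commutes with L_c for every c ∈ M_n(ℂ), and the set {J∘L_a∘J : a ∈ M_n(ℂ)} equals the commutant of {L_a : a ∈ M_n(ℂ)} inside the algebra of ℂ-linear endomorphisms of M_n(ℂ). (Finite-dimensional Tomita–Takesaki relation Jπ_ω(A)J = π_ω(A)'.) -/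
open scoped Matrix

/-- **Tomita–Takesaki relation `Jπ_ω(A)J = π_ω(A)'` in finite dimensions.**
With `J(x) = R^{1/2} x† R^{-1/2}` the modular conjugation of the GNS space of
`ω(a) = Tr(Ra)`, `R = diag(λ)`, and `L_a` left multiplication: `J∘L_a∘J` is right
multiplication by `R^{1/2} a† R^{-1/2}`; hence it commutes with every `L_c`, and
`{J∘L_a∘J : a ∈ M_n(ℂ)}` is exactly the commutant of `{L_a : a ∈ M_n(ℂ)}` in the ℂ-linear
endomorphisms of `M_n(ℂ)`. -/
theorem modular_conjugation_commutant
    {n : ℕ} (lam : Fin n → ℝ) (hpos : ∀ j, 0 < lam j)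
    (R Rhalf Rinvhalf : Matrix (Fin n) (Fin n) ℂ)
    (hR : R = Matrix.diagonal fun j => (lam j : ℂ))
    (hRhalf : Rhalf = Matrix.diagonal fun j => (Real.sqrt (lam j) : ℂ))
    (hRinvhalf : Rinvhalf = Matrix.diagonal fun j => ((Real.sqrt (lam j))⁻¹ : ℂ))
    (J : Matrix (Fin n) (Fin n) ℂ → Matrix (Fin n) (Fin n) ℂ)
    (hJ : ∀ x, J x = Rhalf * xᴴ * Rinvhalf) :
    (∀ (a x : Matrix (Fin n) (Fin n) ℂ), J (a * J x) = x * (Rhalf * aᴴ * Rinvhalf)) ∧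
      (∀ (a c x : Matrix (Fin n) (Fin n) ℂ), J (a * J (c * x)) = c * J (a * J x)) ∧
      {T : Matrix (Fin n) (Fin n) ℂ →ₗ[ℂ] Matrix (Fin n) (Fin n) ℂ |
          ∀ c x, T (c * x) = c * T x}
        = {T : Matrix (Fin n) (Fin n) ℂ →ₗ[ℂ] Matrix (Fin n) (Fin n) ℂ |
            ∃ a, ∀ x, T x = J (a * J x)} := by
  have hs : ∀ j, (Real.sqrt (lam j) : ℂ) ≠ 0 := fun j => by
    exact_mod_cast (Real.sqrt_pos.mpr (hpos j)).ne'
  have hmul : Rhalf * Rinvhalf = 1 := by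
    rw [hRhalf, hRinvhalf, Matrix.diagonal_mul_diagonal,
      show (fun j => (Real.sqrt (lam j) : ℂ) * ((Real.sqrt (lam j) : ℂ))⁻¹) = fun _ => 1 from
        funext fun j => mul_inv_cancel₀ (hs j), Matrix.diagonal_one]
  have hH : Rhalfᴴ = Rhalf := by
    rw [hRhalf, Matrix.diagonal_conjTranspose,
      show (star fun j => (Real.sqrt (lam j) : ℂ)) = fun j => (Real.sqrt (lam j) : ℂ) from
        funext fun j => Complex.conj_ofReal _]
  have hIH : Rinvhalfᴴ = Rinvhalf := by
    rw [hRinvhalf, Matrix.diagonal_conjTranspose,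
      show (star fun j => ((Real.sqrt (lam j) : ℂ))⁻¹) = fun j => ((Real.sqrt (lam j) : ℂ))⁻¹ from
        funext fun j => by simp [Complex.conj_ofReal]]
  have key : ∀ a x : Matrix (Fin n) (Fin n) ℂ,
      J (a * J x) = x * (Rhalf * aᴴ * Rinvhalf) := by
    intro a x
    rw [hJ, hJ]
    simp only [Matrix.conjTranspose_mul, Matrix.conjTranspose_conjTranspose, hH, hIH]
    simp only [mul_assoc]
    rw [← mul_assoc Rhalf Rinvhalf, hmul, one_mul]
  refine ⟨key, fun a c x => by rw [key, key, mul_assoc], ?_⟩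
  ext T
  simp only [Set.mem_setOf_eq]
  constructor
  · intro hT
    refine ⟨Rhalf * (T 1)ᴴ * Rinvhalf, fun x => ?_⟩
    have hx : T x = x * T 1 := by rw [← hT x 1, mul_one]
    rw [key, hx]
    simp only [Matrix.conjTranspose_mul, Matrix.conjTranspose_conjTranspose, hH, hIH]
    congr 1
    simp only [mul_assoc]
    rw [← mul_assoc Rhalf Rinvhalf, hmul, one_mul]
    rw [mul_one]
  · rintro ⟨a, ha⟩ c x
    rw [ha, ha, key, key, mul_assoc]
end

section
/- Let n ≥ 1, λ : Fin n → ℝ with λ_j > 0, R = diag(λ) ∈ M_n(ℂ). For t ∈ ℝ let R^{it} := diag(exp(i t log λ_j)), and define Δ_t(x) := R^{it} x R^{-it} on M_n(ℂ). Then: (i) Δ_t is unitary with respect to the GNS inner product ⟨a,b⟩_ω = Tr(R a† b); (ii) for every a ∈ M_n(ℂ), Δ_t ∘ L_a ∘ Δ_{-t} = L_{R^{it} a R^{-it}}, where L_a(x) = ax; hence conjugation by the modular flow Δ^{it} maps the left-multiplication algebra {L_a : a ∈ M_n(ℂ)} onto itself. (Finite-dimensional form of the second Tomita–Takesaki relation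 Δ^{it} π_ω(A) Δ^{-it} = π_ω(A).) -/
open scoped Matrix

/-- **Tomita–Takesaki relation `Δ^{it} π_ω(A) Δ^{-it} = π_ω(A)` in finite
dimensions.** With `R = diag(λ)`, `R^{it} = diag(exp(i t log λ_j))` and the modular flow
`Δ_t(x) = R^{it} x R^{-it}` on the GNS space `(M_n(ℂ), ⟨a,b⟩_ω = Tr(R a† b))`:
(i) each `Δ_t` is unitary for the GNS inner product (isometric and invertible, with inverse
`Δ_{-t}`); (ii) `Δ_t ∘ L_a ∘ Δ_{-t} = L_{R^{it} a R^{-it}}`, so conjugation by the modular flow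
maps the left-multiplication algebra onto itself. -/
theorem modular_flow_preserves_observables
    {n : ℕ} (lam : Fin n → ℝ) (hpos : ∀ j, 0 < lam j)
    (R : Matrix (Fin n) (Fin n) ℂ) (hR : R = Matrix.diagonal fun j => (lam j : ℂ))
    (Rit : ℝ → Matrix (Fin n) (Fin n) ℂ)
    (hRit : ∀ t, Rit t = Matrix.diagonal fun j =>
      Complex.exp (Complex.I * (t : ℂ) * (Real.log (lam j) : ℂ)))
    (gnsInner : Matrix (Fin n) (Fin n) ℂ → Matrix (Fin n) (Fin n) ℂ → ℂ)
    (hgns : ∀ a b, gnsInner a b = (R * aᴴ * b).trace)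
    (Δt : ℝ → Matrix (Fin n) (Fin n) ℂ → Matrix (Fin n) (Fin n) ℂ)
    (hΔt : ∀ t x, Δt t x = Rit t * x * Rit (-t)) :
    (∀ (t : ℝ) (a b : Matrix (Fin n) (Fin n) ℂ),
        gnsInner (Δt t a) (Δt t b) = gnsInner a b) ∧
      (∀ (t : ℝ) (x : Matrix (Fin n) (Fin n) ℂ), Δt t (Δt (-t) x) = x) ∧
      (∀ (t : ℝ) (a x : Matrix (Fin n) (Fin n) ℂ),
        Δt t (a * Δt (-t) x) = (Rit t * a * Rit (-t)) * x) := by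
  have hmul : ∀ s t : ℝ, Rit s * Rit t = Rit (s + t) := by
    intro s t
    simp only [hRit, Matrix.diagonal_mul_diagonal]
    apply congrArg
    funext j
    rw [← Complex.exp_add]
    congr 1
    push_cast
    ring
  have hunit : ∀ t : ℝ, Rit t * Rit (-t) = 1 := by
    intro t
    rw [hmul]
    have h : t + -t = (0 : ℝ) := by ring
    rw [h]
    simp [hRit]
  have hQP : ∀ t : ℝ, Rit (-t) * Rit t = 1 := by
    intro t
    rw [hmul]
    have h : -t + t = (0 : ℝ) := by ring
    rw [h]
    simp [hRit]
  have hconj : ∀ t : ℝ, (Rit t)ᴴ = Rit (-t) := by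
    intro t
    simp only [hRit, Matrix.diagonal_conjTranspose]
    apply congrArg
    funext j
    simp only [Pi.star_apply, RCLike.star_def, ← Complex.exp_conj, map_mul, Complex.conj_I,
      Complex.conj_ofReal]
    congr 1
    push_cast
    ring
  have hcomm : ∀ t : ℝ, R * Rit t = Rit t * R := by
    intro t
    simp only [hR, hRit, Matrix.diagonal_mul_diagonal]
    apply congrArg
    funext j
    ring
  refine ⟨?_, ?_, ?_⟩
  · intro t a b
    rw [hgns, hgns, hΔt, hΔt]
    simp only [Matrix.conjTranspose_mul, hconj, neg_neg]
    simp only [← mul_assoc]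
    -- goal: (R * Rit t * aᴴ * Rit (-t) * Rit t * b * Rit (-t)).trace = (R * aᴴ * b).trace
    rw [mul_assoc (R * Rit t * aᴴ) (Rit (-t)) (Rit t), hQP t, mul_one]
    rw [Matrix.trace_mul_comm]
    simp only [← mul_assoc]
    rw [← hcomm (-t)]
    rw [mul_assoc R (Rit (-t)) (Rit t), hQP t, mul_one]
  · intro t x
    rw [hΔt, hΔt]
    simp only [neg_neg, ← mul_assoc]
    rw [hunit t, one_mul, mul_assoc, hunit t, mul_one]
  · intro t a x
    rw [hΔt, hΔt]
    simp only [neg_neg, ← mul_assoc]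
    rw [mul_assoc (Rit t * a * Rit (-t) * x) (Rit t) (Rit (-t)), hunit t, mul_one]
end

section
/- Let n ≥ 1, λ : Fin n → ℝ with λ_j > 0 and ∑_j λ_j = 1, R = diag(λ), and Ω ∈ ℂ^{Fin n × Fin n} the unit vector Ω_{(i,j)} = δ_{ij} λ_i^{1/2}. Fix a unitary g ∈ M_n(ℂ), set λ_k(g) := ∑_i λ_i |g_{ik}|², P_k := 1⊗conj(g e_{kk} g*), and ρ_g := ∑_k P_k Q_Ω P_k where Q_Ω is the orthogonal projection onto span(Ω). Then: (i) for every a ∈ M_n(ℂ), Tr(ρ_g·(a⊗1)) = Tr(R·a) (the restriction of ρ_g to subsystem A is ω, independently of g); (ii) for every b ∈ M_n(ℂ), Tr(ρ_g·(1⊗b)) = Tr((∑_k λ_k(g)·conj(g) e_{kk} conj(g)†)·b) (the restriction of ρ_g to subsystem B is ∑_k λ_k(g) ḡ|k⟩⟨k|ḡ*). -/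
open scoped Matrix Kronecker

/-- Let `Ω = ∑_i √λ_i e_i⊗e_i` be the canonical purification of
`ω(a) = Tr(Ra)`, `R = diag(λ)`, let `g` be unitary, `λ_k(g) = ∑_i λ_i |g_{ik}|²`,
`P_k = 1⊗conj(g e_{kk} g*)`, and `ρ_g = ∑_k P_k Q_Ω P_k` the state produced by the
gauge-induced projective measurement.  Then (i) `ρ_g` restricts on subsystem `A = {a⊗1}` to
`ω`, independently of `g`; (ii) `ρ_g` restricts on subsystem `B = {1⊗b}` to
`∑_k λ_k(g)· ḡ|k⟩⟨k|ḡ*`. -/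
theorem gauge_measured_state_restrictions
    {n : ℕ} (lam : Fin n → ℝ) (hpos : ∀ j, 0 < lam j) (hsum : ∑ j, lam j = 1)
    (R : Matrix (Fin n) (Fin n) ℂ) (hR : R = Matrix.diagonal fun j => (lam j : ℂ))
    (Ω : Fin n × Fin n → ℂ)
    (hΩ : ∀ p : Fin n × Fin n, Ω p = if p.1 = p.2 then (Real.sqrt (lam p.1) : ℂ) else 0)
    (g : Matrix (Fin n) (Fin n) ℂ) (hg : g ∈ Matrix.unitaryGroup (Fin n) ℂ)
    (lamg : Fin n → ℝ) (hlamg : ∀ k, lamg k = ∑ i, lam i * ‖g i k‖ ^ 2)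
    (P : Fin n → Matrix (Fin n × Fin n) (Fin n × Fin n) ℂ)
    (hP : ∀ k, P k = (1 : Matrix (Fin n) (Fin n) ℂ) ⊗ₖ
      ((g * Matrix.single k k (1 : ℂ) * gᴴ).map star))
    (Q : Matrix (Fin n × Fin n) (Fin n × Fin n) ℂ)
    (hQ : ∀ p q : Fin n × Fin n, Q p q = Ω p * star (Ω q))
    (ρg : Matrix (Fin n × Fin n) (Fin n × Fin n) ℂ) (hρg : ρg = ∑ k, P k * Q * P k) :
    (∀ a : Matrix (Fin n) (Fin n) ℂ,
        (ρg * (a ⊗ₖ (1 : Matrix (Fin n) (Fin n) ℂ))).trace = (R * a).trace) ∧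
      (∀ b : Matrix (Fin n) (Fin n) ℂ,
        (ρg * ((1 : Matrix (Fin n) (Fin n) ℂ) ⊗ₖ b)).trace
          = ((∑ k, ((lamg k : ℝ) : ℂ) •
              (g.map star * Matrix.single k k (1 : ℂ) * (g.map star)ᴴ)) * b).trace) := by
  -- abbreviation
  set s : Fin n → ℂ := fun i => (Real.sqrt (lam i) : ℂ) with hs
  have hss : ∀ i, s i * s i = (lam i : ℂ) := by
    intro i
    rw [hs]
    push_cast [← Complex.ofReal_mul]
    rw [Real.mul_self_sqrt (hpos i).le]
  -- unitarity, entrywise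
  have hgg : ∀ i i' : Fin n, (∑ k, g i k * star (g i' k)) = if i = i' then (1:ℂ) else 0 := by
    intro i i'
    have h2 : g * star g = 1 := Matrix.mem_unitaryGroup_iff.1 hg
    have := congrFun (congrFun h2 i) i'
    simpa [Matrix.mul_apply, Matrix.one_apply, Matrix.conjTranspose_apply] using this
  have hgstar : ∀ k k' : Fin n, (∑ j, star (g j k) * g j k') = if k = k' then (1:ℂ) else 0 := by
    intro k k'
    have h2 : star g * g = 1 := Matrix.mem_unitaryGroup_iff'.1 hg
    have := congrFun (congrFun h2 k) k'
    simpa [Matrix.mul_apply, Matrix.one_apply, Matrix.conjTranspose_apply] using this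
  -- entries of ρg
  have hM : ∀ k j m : Fin n,
      ((g * Matrix.single k k (1 : ℂ) * gᴴ).map star) j m = star (g j k) * g m k := by
    intro k j m
    simp [Matrix.map_apply, Matrix.mul_apply, Matrix.single, Matrix.conjTranspose_apply,
      Finset.sum_ite_eq, ite_and, mul_comm]
  have hPapp : ∀ k (i j m m' : Fin n), P k (i,j) (m,m') =
      (if i = m then (1:ℂ) else 0) * (star (g j k) * g m' k) := by
    intro k i j m m'
    rw [hP]
    simp only [Matrix.kroneckerMap_apply, Matrix.one_apply, hM]
  have hρ : ∀ i j i' j' : Fin n, ρg (i,j) (i',j') =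
      s i * s i' * ∑ k, (star (g j k) * g i k) * (star (g i' k) * g j' k) := by
    intro i j i' j'
    have hPQP : ∀ k, (P k * Q * P k) (i,j) (i',j') =
        s i * s i' * ((star (g j k) * g i k) * (star (g i' k) * g j' k)) := by
      intro k
      simp only [Matrix.mul_apply, Fintype.sum_prod_type, hPapp, hQ, hΩ]
      simp [Finset.mul_sum, Finset.sum_mul, mul_ite, ite_mul, Finset.sum_ite_eq,
        Finset.sum_ite_eq', apply_ite (star : ℂ → ℂ), hs]
      ring
    rw [hρg]
    simp only [Matrix.sum_apply, hPQP]
    rw [← Finset.mul_sum]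
  constructor
  · -- part (i)
    intro a
    have key : ∀ i i' : Fin n,
        (∑ j, ∑ k, (star (g j k) * g i k) * (star (g i' k) * g j k))
          = if i = i' then (1:ℂ) else 0 := by
      intro i i'
      rw [Finset.sum_comm]
      have h1 : ∀ k : Fin n, (∑ j, (star (g j k) * g i k) * (star (g i' k) * g j k))
          = (g i k * star (g i' k)) * ∑ j, star (g j k) * g j k := by
        intro k
        rw [Finset.mul_sum]
        exact Finset.sum_congr rfl fun j _ => by ring
      simp only [h1, hgstar]
      simpa using hgg i i'
    have lhs1 : (ρg * (a ⊗ₖ (1 : Matrix (Fin n) (Fin n) ℂ))).trace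
        = ∑ i, ∑ j, ∑ i', (s i * s i' * ∑ k,
            (star (g j k) * g i k) * (star (g i' k) * g j k)) * a i' i := by
      simp only [Matrix.trace, Matrix.diag, Matrix.mul_apply, Fintype.sum_prod_type,
        Matrix.kroneckerMap_apply, Matrix.one_apply, hρ]
      refine Finset.sum_congr rfl fun i _ => Finset.sum_congr rfl fun j _ =>
        Finset.sum_congr rfl fun i' _ => ?_
      simp [mul_ite, Finset.sum_ite_eq, Finset.sum_ite_eq']
    rw [lhs1]
    have lhs2 : ∀ i : Fin n, (∑ j, ∑ i', (s i * s i' * ∑ k,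
          (star (g j k) * g i k) * (star (g i' k) * g j k)) * a i' i)
        = ∑ i', (s i * s i' * a i' i) * ∑ j, ∑ k,
            (star (g j k) * g i k) * (star (g i' k) * g j k) := by
      intro i
      rw [Finset.sum_comm]
      refine Finset.sum_congr rfl fun i' _ => ?_
      rw [Finset.mul_sum]
      exact Finset.sum_congr rfl fun j _ => by ring
    simp only [lhs2, key, mul_ite, mul_one, mul_zero, Finset.sum_ite_eq', Finset.mem_univ,
      if_pos]
    rw [hR]
    simp only [Matrix.trace, Matrix.diag, Matrix.mul_apply, Matrix.diagonal_apply, ite_mul,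
      zero_mul, Finset.sum_ite_eq, Finset.mem_univ, if_pos]
    refine Finset.sum_congr rfl fun i _ => ?_
    rw [hss]
  · -- part (ii)
    intro b
    have hlamgC : ∀ k : Fin n, ((lamg k : ℝ) : ℂ)
        = ∑ i, (lam i : ℂ) * (g i k * star (g i k)) := by
      intro k
      rw [hlamg]
      push_cast
      refine Finset.sum_congr rfl fun i _ => ?_
      simp [Complex.mul_conj', Complex.mul_conj, Complex.normSq_eq_norm_sq]
    have central : ∀ j j' : Fin n,
        (∑ i, (s i * s i) * ∑ k, (star (g j k) * g i k) * (star (g i k) * g j' k))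
          = ∑ k, ((lamg k : ℝ) : ℂ) * (star (g j k) * g j' k) := by
      intro j j'
      have h1 : ∀ i : Fin n, (s i * s i) * (∑ k, (star (g j k) * g i k) * (star (g i k) * g j' k))
          = ∑ k, (lam i : ℂ) * (g i k * star (g i k)) * (star (g j k) * g j' k) := by
        intro i
        rw [Finset.mul_sum]
        refine Finset.sum_congr rfl fun k _ => ?_
        rw [show (s i * s i) * ((star (g j k) * g i k) * (star (g i k) * g j' k))
            = (s i * s i) * (g i k * star (g i k)) * (star (g j k) * g j' k) from by ring, hss]
      simp only [h1]
      rw [Finset.sum_comm]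
      refine Finset.sum_congr rfl fun k _ => ?_
      rw [hlamgC, Finset.sum_mul]
    have lhs1 : (ρg * ((1 : Matrix (Fin n) (Fin n) ℂ) ⊗ₖ b)).trace
        = ∑ j, ∑ j', (∑ i, (s i * s i) * ∑ k,
            (star (g j k) * g i k) * (star (g i k) * g j' k)) * b j' j := by
      simp only [Matrix.trace, Matrix.diag, Matrix.mul_apply, Fintype.sum_prod_type,
        Matrix.kroneckerMap_apply, Matrix.one_apply, hρ]
      rw [Finset.sum_comm]
      refine Finset.sum_congr rfl fun j _ => ?_
      have step : ∀ i : Fin n, (∑ i', ∑ j', s i * s i' *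
            (∑ k, (star (g j k) * g i k) * (star (g i' k) * g j' k)) *
            ((if i' = i then (1:ℂ) else 0) * b j' j))
          = ∑ j', ((s i * s i) * ∑ k, (star (g j k) * g i k) * (star (g i k) * g j' k)) * b j' j := by
        intro i
        rw [Finset.sum_comm]
        refine Finset.sum_congr rfl fun j' _ => ?_
        simp [ite_mul, mul_ite, Finset.sum_ite_eq, Finset.sum_ite_eq']
      rw [show (∑ i, ∑ i', ∑ j', s i * s i' *
            (∑ k, (star (g j k) * g i k) * (star (g i' k) * g j' k)) *
            ((if i' = i then (1:ℂ) else 0) * b j' j))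
          = ∑ i, ∑ j', ((s i * s i) * ∑ k, (star (g j k) * g i k) * (star (g i k) * g j' k)) * b j' j
          from Finset.sum_congr rfl fun i _ => step i]
      rw [Finset.sum_comm]
      exact Finset.sum_congr rfl fun j' _ => (Finset.sum_mul _ _ _).symm
    rw [lhs1]
    have rhs1 : ((∑ k, ((lamg k : ℝ) : ℂ) •
          (g.map star * Matrix.single k k (1 : ℂ) * (g.map star)ᴴ)) * b).trace
        = ∑ j, ∑ j', (∑ k, ((lamg k : ℝ) : ℂ) * (star (g j k) * g j' k)) * b j' j := by
      have hgb : ∀ (k j j' : Fin n),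
          (g.map star * Matrix.single k k (1 : ℂ) * (g.map star)ᴴ) j j'
            = star (g j k) * g j' k := by
        intro k j j'
        simp [Matrix.map_apply, Matrix.mul_apply, Matrix.single,
          Matrix.conjTranspose_apply, Finset.sum_ite_eq, ite_and]
      simp only [Matrix.trace, Matrix.diag, Matrix.mul_apply, Matrix.sum_apply,
        Matrix.smul_apply, hgb, smul_eq_mul]
    rw [rhs1]
    exact Finset.sum_congr rfl fun j _ => Finset.sum_congr rfl fun j' _ => by rw [central]
end

section
/- Let n ≥ 1, λ : Fin n → ℝ with λ_j > 0 and ∑_j λ_j = 1, Ω ∈ ℂ^{Fin n × Fin n} the unit vector Ω_{(i,j)} = δ_{ij} λ_i^{1/2}, g ∈ M_n(ℂ) unitary, λ_k(g) := ∑_i λ_i |g_{ik}|², P_k := 1⊗conj(g e_{kk} g*), and ρ_g := ∑_k P_k Q_Ω P_k with Q_Ω the projection onto span(Ω). Then the multiset of eigenvalues of ρ_g counted with multiplicity is {λ_1(g), …, λ_n(g)} together with n² − n zeros. In particular the von Neumann entropy of ρ_g is ∑_k negMulLog(λ_k(g)). -/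
open scoped Matrix Kronecker
open Polynomial Matrix

lemma aux_fromBlocks_sub {m R : Type*} [CommRing R] (A B C' D A' B' C'' D' : Matrix m m R) :
    fromBlocks A B C' D - fromBlocks A' B' C'' D' = fromBlocks (A - A') (B - B') (C' - C'') (D - D') := by
  ext (i | i) (j | j) <;> simp [Matrix.sub_apply]

lemma aux_charpoly_conj {m R : Type*} [DecidableEq m] [Fintype m] [CommRing R]
    (U U' N : Matrix m m R) (h1 : U * U' = 1) :
    (U * N * U').charpoly = N.charpoly := by
  have hcm : (U * N * U').charmatrix = (C.mapMatrix U) * N.charmatrix * (C.mapMatrix U') := by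
    rw [charmatrix, charmatrix]
    have hsc : ∀ A : Matrix m m R[X], A * scalar m X = scalar m X * A := fun A =>
      ((scalar_commute X (fun r' => Commute.all X r') A)).symm
    have hUU' : C.mapMatrix U * C.mapMatrix U' = 1 := by
      rw [← _root_.map_mul, h1, _root_.map_one]
    simp only [_root_.map_mul]
    rw [mul_sub, sub_mul, hsc, mul_assoc (scalar m X), hUU', mul_one]
  have hdet : (C.mapMatrix U).det * (C.mapMatrix U').det = 1 := by
    rw [← det_mul, ← _root_.map_mul, h1, _root_.map_one, det_one]
  rw [charpoly, charpoly, hcm, det_mul, det_mul]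
  calc (C.mapMatrix U).det * N.charmatrix.det * (C.mapMatrix U').det
      = N.charmatrix.det * ((C.mapMatrix U).det * (C.mapMatrix U').det) := by ring
    _ = N.charmatrix.det := by rw [hdet, mul_one]

lemma aux_charmatrix_fromBlocks {m R : Type*} [DecidableEq m] [Fintype m] [CommRing R]
    (A D Cm : Matrix m m R) :
    (fromBlocks A 0 Cm D).charmatrix = fromBlocks A.charmatrix 0 (-(Cm.map C)) D.charmatrix := by
  have hscalar : (scalar (m ⊕ m) X : Matrix (m ⊕ m) (m ⊕ m) R[X])
      = fromBlocks (scalar m X) 0 0 (scalar m X) := by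
    rw [scalar_apply, scalar_apply, fromBlocks_diagonal]
    congr 1
    ext (i | i) <;> rfl
  rw [charmatrix, RingHom.mapMatrix_apply, fromBlocks_map, hscalar, aux_fromBlocks_sub,
    charmatrix, charmatrix, RingHom.mapMatrix_apply, RingHom.mapMatrix_apply]
  congr 1 <;> simp

lemma aux_charpoly_triangular {m R : Type*} [DecidableEq m] [Fintype m] [CommRing R]
    (A D Cm : Matrix m m R) :
    (fromBlocks A 0 Cm D).charpoly = A.charpoly * D.charpoly := by
  rw [charpoly, aux_charmatrix_fromBlocks, det_fromBlocks_zero₁₂, charpoly, charpoly]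

lemma aux_charpoly_zero {m R : Type*} [DecidableEq m] [Fintype m] [CommRing R] :
    (0 : Matrix m m R).charpoly = X ^ Fintype.card m := by
  rw [charpoly, charmatrix, map_zero, sub_zero, scalar_apply, det_diagonal]
  simp [Finset.prod_const, Finset.card_univ]

lemma aux_charpoly_mul_comm {m R : Type*} [DecidableEq m] [Fintype m] [CommRing R] [IsDomain R]
    (A B : Matrix m m R) : (A * B).charpoly = (B * A).charpoly := by
  have key : (fromBlocks 1 A 0 1 : Matrix (m ⊕ m) (m ⊕ m) R) * fromBlocks 0 0 B (B * A) *
      fromBlocks 1 (-A) 0 1 = fromBlocks (A * B) 0 B 0 := by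
    rw [fromBlocks_multiply, fromBlocks_multiply]
    congr 1 <;> simp [mul_assoc]
  have h1 : (fromBlocks 1 A 0 1 : Matrix (m ⊕ m) (m ⊕ m) R) * fromBlocks 1 (-A) 0 1 = 1 := by
    rw [fromBlocks_multiply]; simp [← fromBlocks_one]
  have := aux_charpoly_conj _ _ (fromBlocks 0 0 B (B * A)) h1
  rw [key] at this
  rw [aux_charpoly_triangular, aux_charpoly_triangular, aux_charpoly_zero] at this
  have hX : (X : R[X]) ^ Fintype.card m ≠ 0 := pow_ne_zero _ X_ne_zero
  have h2 : (A * B).charpoly * X ^ Fintype.card m = (B * A).charpoly * X ^ Fintype.card m := by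
    rw [this]; ring
  exact mul_right_cancel₀ hX h2

lemma aux_charpoly_diagonal {m R : Type*} [DecidableEq m] [Fintype m] [CommRing R]
    (d : m → R) : (diagonal d).charpoly = ∏ i, (X - C (d i)) := by
  rw [charpoly]
  have : (diagonal d).charmatrix = diagonal (fun i => X - C (d i)) := by
    ext i j
    rcases eq_or_ne i j with rfl | hij
    · simp [charmatrix_apply_eq]
    · rw [charmatrix_apply_ne _ _ _ hij, diagonal_apply_ne _ hij]; simp [diagonal_apply_ne _ hij]
  rw [this, det_diagonal]

/-- The state `ρ_g = ∑_k P_k Q_Ω P_k` obtained from the purification `Ω`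
by the gauge-induced projective measurement `P_k = 1⊗conj(g e_{kk} g*)` has eigenvalues
(with multiplicity, as roots of the characteristic polynomial) `λ_1(g), …, λ_n(g)` together
with `n² − n` zeros, where `λ_k(g) = ∑_i λ_i |g_{ik}|²`; hence its von Neumann entropy is
`∑_k negMulLog λ_k(g)`. -/
theorem spectrum_and_entropy_of_gauge_measured_state
    {n : ℕ} (hn : 1 ≤ n) (lam : Fin n → ℝ) (hpos : ∀ j, 0 < lam j) (hsum : ∑ j, lam j = 1)
    (Ω : Fin n × Fin n → ℂ)
    (hΩ : ∀ p : Fin n × Fin n, Ω p = if p.1 = p.2 then (Real.sqrt (lam p.1) : ℂ) else 0)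
    (g : Matrix (Fin n) (Fin n) ℂ) (hg : g ∈ Matrix.unitaryGroup (Fin n) ℂ)
    (lamg : Fin n → ℝ) (hlamg : ∀ k, lamg k = ∑ i, lam i * ‖g i k‖ ^ 2)
    (P : Fin n → Matrix (Fin n × Fin n) (Fin n × Fin n) ℂ)
    (hP : ∀ k, P k = (1 : Matrix (Fin n) (Fin n) ℂ) ⊗ₖ
      ((g * Matrix.single k k (1 : ℂ) * gᴴ).map star))
    (Q : Matrix (Fin n × Fin n) (Fin n × Fin n) ℂ)
    (hQ : ∀ p q : Fin n × Fin n, Q p q = Ω p * star (Ω q))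
    (ρg : Matrix (Fin n × Fin n) (Fin n × Fin n) ℂ) (hρg : ρg = ∑ k, P k * Q * P k) :
    ρg.charpoly.roots
        = (Finset.univ.val.map fun k => ((lamg k : ℝ) : ℂ))
          + Multiset.replicate (n ^ 2 - n) 0 ∧
      (ρg.charpoly.roots.map fun z => Real.negMulLog z.re).sum
        = ∑ k, Real.negMulLog (lamg k) := by
  classical
  set j0 : Fin n := ⟨0, hn⟩ with hj0
  set v : Fin n → (Fin n × Fin n) → ℂ :=
    fun k p => (starRingEnd ℂ) (g p.2 k) * g p.1 k * (Real.sqrt (lam p.1) : ℂ) with hv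
  set W : Matrix (Fin n × Fin n) (Fin n × Fin n) ℂ :=
    Matrix.of (fun p q => if q.2 = j0 then v q.1 p else 0) with hW
  set d : Fin n × Fin n → ℂ := fun q => if q.2 = j0 then (lamg q.1 : ℂ) else 0 with hd
  -- entries of P k * Q * P k
  have hent : ∀ k (p q : Fin n × Fin n),
      (P k * Q * P k) p q = v k p * (starRingEnd ℂ) (v k q) := by
    intro k p q
    have hgE : ∀ j j' : Fin n, (g * Matrix.single k k (1 : ℂ) * gᴴ) j j'
        = g j k * (starRingEnd ℂ) (g j' k) := by
      intro j j'
      simp [Matrix.mul_apply, Matrix.single, Matrix.conjTranspose_apply,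
        Finset.sum_ite_eq, ite_and, mul_comm]
    have hPk : ∀ a b : Fin n × Fin n, P k a b
        = (if a.1 = b.1 then (1:ℂ) else 0) * ((starRingEnd ℂ) (g a.2 k) * g b.2 k) := by
      intro a b
      rw [hP]
      simp only [Matrix.kroneckerMap_apply, Matrix.map_apply, Matrix.one_apply, hgE]
      simp [mul_comm]
    rw [Matrix.mul_apply]
    simp_rw [Matrix.mul_apply, hPk, hQ, hΩ, Fintype.sum_prod_type, hv]
    simp [Finset.sum_ite_eq, Finset.sum_ite_eq', ite_and, Finset.mul_sum, Finset.sum_mul,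
      apply_ite (starRingEnd ℂ), mul_ite, ite_mul]
    ring
  -- inner products of the vectors v k
  have hinner : ∀ k l : Fin n, ∑ p : Fin n × Fin n, (starRingEnd ℂ) (v k p) * v l p
      = if k = l then (lamg k : ℂ) else 0 := by
    intro k l
    have hu : gᴴ * g = 1 := hg.1
    have hfac : ∑ p : Fin n × Fin n, (starRingEnd ℂ) (v k p) * v l p
        = (∑ j, (starRingEnd ℂ) (g j l) * g j k) *
          (∑ i, (starRingEnd ℂ) (g i k) * g i l * ((lam i : ℂ))) := by
      rw [Finset.sum_mul_sum, Fintype.sum_prod_type]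
      rw [Finset.sum_comm]
      refine Finset.sum_congr rfl fun i _ => Finset.sum_congr rfl fun j _ => ?_
      simp only [hv]
      have hsq : ∀ a : Fin n, ((Real.sqrt (lam a) : ℂ)) * ((Real.sqrt (lam a) : ℂ)) = (lam a : ℂ) := by
        intro a; rw [← Complex.ofReal_mul, Real.mul_self_sqrt (hpos a).le]
      simp only [_root_.map_mul, Complex.conj_conj, Complex.conj_ofReal]
      linear_combination (g i k * (starRingEnd ℂ) (g j k) * (starRingEnd ℂ) (g i l) * g j l) * hsq j
    rw [hfac]
    have h1 : (∑ j, (starRingEnd ℂ) (g j l) * g j k) = if k = l then 1 else 0 := by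
      have := congrArg (fun M => M l k) hu
      simpa [Matrix.mul_apply, Matrix.conjTranspose_apply, Matrix.one_apply, eq_comm] using this
    rcases eq_or_ne k l with rfl | hkl
    · rw [h1, if_pos rfl, one_mul, if_pos rfl, hlamg]
      push_cast
      refine Finset.sum_congr rfl fun i _ => ?_
      rw [Complex.conj_mul']
      push_cast
      ring
    · rw [h1, if_neg hkl, zero_mul, if_neg hkl]
  -- ρg = W * Wᴴ
  have hρW : ρg = W * Wᴴ := by
    ext p q
    rw [hρg, Matrix.sum_apply]
    simp_rw [hent]
    rw [Matrix.mul_apply]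
    simp only [hW, Matrix.conjTranspose_apply, Matrix.of_apply]
    rw [Fintype.sum_prod_type_right]
    simp [Finset.sum_ite_eq', apply_ite (starRingEnd ℂ), mul_ite, ite_mul]
  -- Wᴴ * W is diagonal
  have hWW : Wᴴ * W = Matrix.diagonal d := by
    ext q q'
    rw [Matrix.mul_apply]
    simp only [hW, Matrix.conjTranspose_apply, Matrix.of_apply]
    rcases eq_or_ne q.2 j0 with h2 | h2
    · rcases eq_or_ne q'.2 j0 with h2' | h2'
      · have : ∀ p, star (if q.2 = j0 then v q.1 p else 0) *
            (if q'.2 = j0 then v q'.1 p else 0) = (starRingEnd ℂ) (v q.1 p) * v q'.1 p := by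
          intro p; rw [if_pos h2, if_pos h2']; rfl
        simp_rw [this]
        rw [hinner]
        rcases eq_or_ne q.1 q'.1 with h1 | h1
        · have hqq : q = q' := Prod.ext h1 (h2.trans h2'.symm)
          rw [if_pos h1, hqq, Matrix.diagonal_apply_eq]
          simp [hd, h2']
        · have hqq : q ≠ q' := fun h => h1 (by rw [h])
          rw [if_neg h1, Matrix.diagonal_apply_ne _ hqq]
      · have hqq : q ≠ q' := fun h => h2' (by rw [← h]; exact h2)
        rw [Matrix.diagonal_apply_ne _ hqq]
        simp [h2']
    · have : ∀ p, star (if q.2 = j0 then v q.1 p else 0) *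
          (if q'.2 = j0 then v q'.1 p else 0) = if q'.2 = j0 then 0 * v q'.1 p else 0 := by
        intro p; rw [if_neg h2]; simp
      simp_rw [this]
      rcases eq_or_ne q q' with rfl | hqq
      · rw [Matrix.diagonal_apply_eq, hd]
        simp [if_neg h2]
      · rw [Matrix.diagonal_apply_ne _ hqq]
        simp
  -- characteristic polynomial
  have hcp : ρg.charpoly = ∏ p : Fin n × Fin n, (X - C (d p)) := by
    rw [hρW, aux_charpoly_mul_comm, hWW, aux_charpoly_diagonal]
  have hroots : ρg.charpoly.roots = Multiset.map d Finset.univ.val := by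
    rw [hcp]
    rw [Finset.prod_eq_multiset_prod]
    have hmm : Multiset.map (fun p => X - C (d p)) Finset.univ.val
        = Multiset.map (fun a => X - C a) (Multiset.map d Finset.univ.val) := by
      rw [Multiset.map_map]; rfl
    rw [hmm]
    exact roots_multiset_prod_X_sub_C _
  -- split the multiset
  have hsplit : Multiset.map d Finset.univ.val
      = (Finset.univ.val.map fun k => ((lamg k : ℝ) : ℂ)) + Multiset.replicate (n ^ 2 - n) 0 := by
    set s : Multiset (Fin n × Fin n) := Finset.univ.val with hs
    have hfil : Multiset.filter (fun p : Fin n × Fin n => p.2 = j0) s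
        = Multiset.map (fun k => (k, j0)) Finset.univ.val := by
      refine Multiset.Nodup.ext ?_ ?_ |>.mpr ?_
      · exact Multiset.Nodup.filter _ Finset.univ.nodup
      · exact Multiset.Nodup.map (fun a b hab => (Prod.mk.injEq _ _ _ _ ▸ hab : _ ∧ _).1)
          Finset.univ.nodup
      · intro p
        simp only [Multiset.mem_filter, Multiset.mem_map]
        constructor
        · rintro ⟨_, h⟩; exact ⟨p.1, Multiset.mem_toList.mp (by simp [hs]), by
            rw [← h]⟩
        · rintro ⟨k, _, rfl⟩; exact ⟨by simp [hs], rfl⟩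
    have hcard1 : Multiset.card (Multiset.filter (fun p : Fin n × Fin n => p.2 = j0) s) = n := by
      rw [hfil, Multiset.card_map]; simp [hs]
    have hcards : Multiset.card s = n ^ 2 := by
      simp [hs, Finset.card_univ, sq]
    have hmapfil : Multiset.map d (Multiset.filter (fun p : Fin n × Fin n => p.2 = j0) s)
        = Finset.univ.val.map fun k => ((lamg k : ℝ) : ℂ) := by
      rw [hfil, Multiset.map_map]
      refine Multiset.map_congr rfl fun k _ => ?_
      simp [hd]
    have hmapnot : Multiset.map d (Multiset.filter (fun p : Fin n × Fin n => ¬ p.2 = j0) s)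
        = Multiset.replicate (n ^ 2 - n) 0 := by
      rw [Multiset.eq_replicate]
      constructor
      · rw [Multiset.card_map]
        have := Multiset.filter_add_not (fun p : Fin n × Fin n => p.2 = j0) s
        have hc := congrArg Multiset.card this
        rw [Multiset.card_add, hcard1, hcards] at hc
        omega
      · intro b hb
        obtain ⟨p, hp, rfl⟩ := Multiset.mem_map.mp hb
        have := (Multiset.mem_filter.mp hp).2
        simp [hd, this]
    calc Multiset.map d s
        = Multiset.map d (Multiset.filter (fun p : Fin n × Fin n => p.2 = j0) s
            + Multiset.filter (fun p : Fin n × Fin n => ¬ p.2 = j0) s) := by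
          rw [Multiset.filter_add_not]
      _ = _ := by rw [Multiset.map_add, hmapfil, hmapnot]
  have hfinal := hroots.trans hsplit
  refine ⟨hfinal, ?_⟩
  rw [hfinal, Multiset.map_add, Multiset.sum_add, Multiset.map_map, Multiset.map_replicate]
  have h0 : Real.negMulLog (0 : ℂ).re = 0 := by simp [Real.negMulLog_zero]
  rw [h0, Multiset.sum_replicate, smul_zero, add_zero]
  rw [Finset.sum_eq_multiset_sum]
  exact congrArg Multiset.sum (Multiset.map_congr rfl fun k _ => by simp)
end
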